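/- Let σ > 0, let ν be a probability measure on a measurable parameter space Γ, and let γ ↦ s_γ be a measurable map from Γ to ℝⁿ such that for every x ∈ ℝⁿ the function γ ↦ exp((⟪x, s_γ⟫ − ‖s_γ‖²/2)/σ²) is ν-integrable. Define the likelihood ratio λ(x) = ∫ exp((⟪x, s_γ⟫ − ‖s_γ‖²/2)/σ²) dν(γ). Then λ is a convex function on ℝⁿ, and consequently for every τ ∈ ℝ the sublevel set {x ∈ ℝⁿ : λ(x) ≤ τ} is a convex subset of ℝⁿ. (This is the paper's Proposition 1: under Gaussian noise N(0, σ²I), the Neyman–Pearson optimal decision region for 'noise only' is convex.) -/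

import Mathlib

open MeasureTheory Real

/-- **Proposition 1 (convexity of the optimal decision region).**
Let `σ > 0`, `ν` a probability measure on a measurable parameter space `Γ`, and
`γ ↦ s γ` a measurable map into `ℝⁿ` such that for every `x` the integrand
`γ ↦ exp((⟪x, s γ⟫ − ‖s γ‖²/2)/σ²)` is `ν`-integrable.  Then the likelihood
ratio `lam x = ∫ exp((⟪x, s γ⟫ − ‖s γ‖²/2)/σ²) dν(γ)` is a convex function on `ℝⁿ`,
and for every threshold `τ` the sublevel set `{x | lam x ≤ τ}` is convex. -/
theorem matched_filter_optimal_region_convex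
    {n : ℕ} {Γ : Type*} [MeasurableSpace Γ]
    (ν : Measure Γ) [IsProbabilityMeasure ν]
    (s : Γ → EuclideanSpace ℝ (Fin n)) (hs : Measurable s)
    (σ : ℝ) (hσ : 0 < σ)
    (hint : ∀ x : EuclideanSpace ℝ (Fin n),
      Integrable (fun γ => Real.exp (((inner ℝ x (s γ) : ℝ) - ‖s γ‖ ^ 2 / 2) / σ ^ 2)) ν)
    (lam : EuclideanSpace ℝ (Fin n) → ℝ)
    (hlam : ∀ x, lam x = ∫ γ, Real.exp (((inner ℝ x (s γ) : ℝ) - ‖s γ‖ ^ 2 / 2) / σ ^ 2) ∂ν) :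
    ConvexOn ℝ Set.univ lam ∧ ∀ τ : ℝ, Convex ℝ {x | lam x ≤ τ} := by
  have hconv : ConvexOn ℝ Set.univ lam := by
    refine ⟨convex_univ, ?_⟩
    intro x _ y _ a b ha hb hab
    have key : ∀ γ,
        Real.exp (((inner ℝ (a • x + b • y) (s γ) : ℝ) - ‖s γ‖ ^ 2 / 2) / σ ^ 2)
        ≤ a * Real.exp (((inner ℝ x (s γ) : ℝ) - ‖s γ‖ ^ 2 / 2) / σ ^ 2)
          + b * Real.exp (((inner ℝ y (s γ) : ℝ) - ‖s γ‖ ^ 2 / 2) / σ ^ 2) := by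
      intro γ
      have hinner : (inner ℝ (a • x + b • y) (s γ) : ℝ)
          = a * (inner ℝ x (s γ) : ℝ) + b * (inner ℝ y (s γ) : ℝ) := by
        rw [inner_add_left, real_inner_smul_left, real_inner_smul_left]
      have harg : ((inner ℝ (a • x + b • y) (s γ) : ℝ) - ‖s γ‖ ^ 2 / 2) / σ ^ 2
          = a * (((inner ℝ x (s γ) : ℝ) - ‖s γ‖ ^ 2 / 2) / σ ^ 2)
            + b * (((inner ℝ y (s γ) : ℝ) - ‖s γ‖ ^ 2 / 2) / σ ^ 2) := by
        rw [hinner]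
        field_simp
        ring_nf
        nlinarith [hab]
      rw [harg]
      have := convexOn_exp.2 (Set.mem_univ (((inner ℝ x (s γ) : ℝ) - ‖s γ‖ ^ 2 / 2) / σ ^ 2))
        (Set.mem_univ (((inner ℝ y (s γ) : ℝ) - ‖s γ‖ ^ 2 / 2) / σ ^ 2)) ha hb hab
      simpa [smul_eq_mul] using this
    rw [hlam, hlam, hlam, smul_eq_mul, smul_eq_mul]
    calc ∫ γ, Real.exp (((inner ℝ (a • x + b • y) (s γ) : ℝ) - ‖s γ‖ ^ 2 / 2) / σ ^ 2) ∂ν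
        ≤ ∫ γ, (a * Real.exp (((inner ℝ x (s γ) : ℝ) - ‖s γ‖ ^ 2 / 2) / σ ^ 2)
            + b * Real.exp (((inner ℝ y (s γ) : ℝ) - ‖s γ‖ ^ 2 / 2) / σ ^ 2)) ∂ν := by
          exact integral_mono (hint _) (((hint x).const_mul a).add ((hint y).const_mul b)) key
      _ = a * ∫ γ, Real.exp (((inner ℝ x (s γ) : ℝ) - ‖s γ‖ ^ 2 / 2) / σ ^ 2) ∂ν
            + b * ∫ γ, Real.exp (((inner ℝ y (s γ) : ℝ) - ‖s γ‖ ^ 2 / 2) / σ ^ 2) ∂ν := by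
          rw [integral_add ((hint x).const_mul a) ((hint y).const_mul b),
            integral_const_mul, integral_const_mul]
  refine ⟨hconv, fun τ => ?_⟩
  have := hconv.convex_le τ
  simpa using this
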